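/- Let A ∈ ℝ^{m×N}, y ∈ ℝ^m, and let x* ∈ ℝ^N_+ satisfy Ax* = y. Let S be the support of x*. Then x* is the unique minimizer of ‖x‖₁ over {x : Ax = y, x ≥ 0} if and only if: (i) the columns of A indexed by S are linearly independent, and (ii) there exists u ∈ ℝ^m such that (Aᵀu)_i = 1 for all i ∈ S and (Aᵀu)_i < 1 for all i ∉ S. -/

import Mathlib

open Finset
open scoped InnerProductSpace


private lemma sum_swap_aux (m N : ℕ) (A : Matrix (Fin m) (Fin N) ℝ) (u : Fin m → ℝ)
    (yy : Fin N → ℝ) :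
    ∑ i, A.transpose.mulVec u i * yy i = ∑ j, A.mulVec yy j * u j := by
  simp only [Matrix.mulVec, dotProduct, Matrix.transpose_apply, Finset.sum_mul]
  rw [Finset.sum_comm]
  exact Finset.sum_congr rfl fun j _ => Finset.sum_congr rfl fun i _ => by ring

private lemma coord_le_norm (N : ℕ) (v : EuclideanSpace ℝ (Fin N)) (i : Fin N) : |v i| ≤ ‖v‖ := by
  rw [EuclideanSpace.norm_eq, ← Real.sqrt_sq_eq_abs]
  refine Real.sqrt_le_sqrt ?_
  refine (Finset.single_le_sum (f := fun j => ‖v j‖ ^ 2) (fun j _ => by positivity)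
    (mem_univ i)).trans_eq' ?_
  simp [sq_abs]

private lemma mem_of_ball_subset_closure (N : ℕ) (D : Set (EuclideanSpace ℝ (Fin N)))
    (hconv : Convex ℝ D) (p : EuclideanSpace ℝ (Fin N)) (δ : ℝ) (hδ : 0 < δ)
    (hball : Metric.ball p δ ⊆ closure D) : p ∈ D := by
  have hint : p ∈ interior (closure D) :=
    mem_interior.mpr ⟨Metric.ball p δ, hball, Metric.isOpen_ball, Metric.mem_ball_self hδ⟩
  have hclconv : Convex ℝ (closure D) := hconv.closure
  have hspan_top : affineSpan ℝ (closure D) = ⊤ :=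
    hclconv.interior_nonempty_iff_affineSpan_eq_top.mp ⟨p, hint⟩
  have hspanD : affineSpan ℝ D = ⊤ := by
    refine top_unique ?_
    rw [← hspan_top]
    refine affineSpan_le.mpr ?_
    exact closure_minimal (subset_affineSpan ℝ D)
      (AffineSubspace.closed_of_finiteDimensional (affineSpan ℝ D))
  obtain ⟨x₀, hx₀⟩ := hconv.interior_nonempty_iff_affineSpan_eq_top.mpr hspanD
  obtain ⟨r, hr, hrball⟩ := Metric.isOpen_iff.mp isOpen_interior p hint
  set η := r / (2 * (‖p - x₀‖ + 1)) with hηdef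
  have hη0 : 0 < η := by positivity
  have hp' : p + η • (p - x₀) ∈ closure D := by
    refine interior_subset (hrball ?_)
    rw [Metric.mem_ball, dist_eq_norm]
    have h1 : p + η • (p - x₀) - p = η • (p - x₀) := by abel
    rw [h1, norm_smul, Real.norm_eq_abs, abs_of_pos hη0, hηdef]
    have h2 : ‖p - x₀‖ < 2 * (‖p - x₀‖ + 1) := by nlinarith [norm_nonneg (p - x₀)]
    calc r / (2 * (‖p - x₀‖ + 1)) * ‖p - x₀‖
        < r / (2 * (‖p - x₀‖ + 1)) * (2 * (‖p - x₀‖ + 1)) := by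
          by_cases h : ‖p - x₀‖ = 0
          · rw [h, mul_zero]; positivity
          · exact mul_lt_mul_of_pos_left h2 (by positivity)
      _ = r := by field_simp
  have h1η : (0:ℝ) < 1 + η := by positivity
  have hcombo : (η/(1+η)) • x₀ + (1/(1+η)) • (p + η • (p - x₀)) = p := by
    match_scalars <;> field_simp <;> ring
  have hpint : p ∈ interior D := by
    rw [← hcombo]
    exact hconv.combo_interior_closure_mem_interior hx₀ hp'
      (by positivity) (by positivity) (by field_simp; ring)
  exact interior_subset hpint

private lemma dual_certificate (m N : ℕ) (A : Matrix (Fin m) (Fin N) ℝ)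
    (S : Fin N → Prop)
    (hN : ∀ v : Fin N → ℝ, A.mulVec v = 0 → (∀ i, ¬ S i → 0 ≤ v i) → v ≠ 0 →
      0 < ∑ i, v i) :
    ∃ u : Fin m → ℝ, (∀ i, S i → A.transpose.mulVec u i = 1) ∧
      (∀ i, ¬ S i → A.transpose.mulVec u i < 1) := by
  classical
  set D : Set (EuclideanSpace ℝ (Fin N)) :=
    {z | ∃ u : Fin m → ℝ, ∃ w : Fin N → ℝ, (∀ i, S i → w i = 0) ∧ (∀ i, 0 ≤ w i) ∧
      ∀ i, z i = A.transpose.mulVec u i + w i} with hDdef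
  -- D is a convex cone
  have h0D : (0 : EuclideanSpace ℝ (Fin N)) ∈ D := by
    refine ⟨0, 0, fun _ _ => rfl, fun _ => le_refl 0, fun i => ?_⟩
    simp [Matrix.mulVec_zero]
  have hsmul : ∀ ⦃c : ℝ⦄, 0 < c → ∀ ⦃z : EuclideanSpace ℝ (Fin N)⦄, z ∈ D → c • z ∈ D := by
    rintro c hc z ⟨u, w, hw0, hwpos, hz⟩
    refine ⟨c • u, c • w, fun i hi => by simp [hw0 i hi],
      fun i => by simpa using mul_nonneg hc.le (hwpos i), fun i => ?_⟩
    have hcz : (c • z) i = c * z i := rfl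
    rw [hcz, hz i, Matrix.mulVec_smul]
    simp [mul_add]
  have hadd : ∀ ⦃z₁ : EuclideanSpace ℝ (Fin N)⦄, z₁ ∈ D →
      ∀ ⦃z₂ : EuclideanSpace ℝ (Fin N)⦄, z₂ ∈ D → z₁ + z₂ ∈ D := by
    rintro z₁ ⟨u₁, w₁, hw₁0, hw₁p, hz₁⟩ z₂ ⟨u₂, w₂, hw₂0, hw₂p, hz₂⟩
    refine ⟨u₁ + u₂, w₁ + w₂, fun i hi => by simp [hw₁0 i hi, hw₂0 i hi],
      fun i => add_nonneg (hw₁p i) (hw₂p i), fun i => ?_⟩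
    have hzz : (z₁ + z₂) i = z₁ i + z₂ i := rfl
    rw [hzz, hz₁ i, hz₂ i, Matrix.mulVec_add]
    simp [Pi.add_apply]; ring
  set Dc : ConvexCone ℝ (EuclideanSpace ℝ (Fin N)) :=
    { carrier := D, smul_mem' := hsmul, add_mem' := hadd } with hDc
  -- separation
  have hsep : ∀ b : EuclideanSpace ℝ (Fin N),
      (∀ v : EuclideanSpace ℝ (Fin N), A.mulVec v = 0 → (∀ i, ¬ S i → 0 ≤ v i) →
        0 ≤ ∑ i, b i * v i) → b ∈ closure D := by
    intro b hb
    by_contra hbD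
    have hbD' : b ∉ Dc.closure := fun h => hbD (ConvexCone.mem_closure.mp h)
    obtain ⟨yy, hy1, hy2⟩ :=
      ProperCone.hyperplane_separation' (Submodule.closure (Dc.toPointedCone h0D)) (x₀ := b)
        (fun h => hbD h)
    have hyD : ∀ x ∈ D, 0 ≤ ⟪x, yy⟫_ℝ := fun x hx =>
      hy1 x (subset_closure hx)
    have hup : ∀ u : Fin m → ℝ, 0 ≤ ∑ j, A.mulVec yy j * u j := by
      intro u
      have hmem : WithLp.toLp 2 (A.transpose.mulVec u) ∈ D :=
        ⟨u, 0, fun _ _ => rfl, fun _ => le_refl 0, fun i => by simp⟩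
      have h := hyD _ hmem
      rw [PiLp.inner_apply] at h
      simp only [RCLike.inner_apply', starRingEnd_apply, star_trivial] at h
      exact h.trans_eq (sum_swap_aux m N A u yy)
    have hAy : A.mulVec yy = 0 := by
      have h := hup (fun j => -(A.mulVec yy j))
      have h2 : ∑ j, (A.mulVec yy j) ^ 2 ≤ 0 := by
        have heq : ∑ j, A.mulVec yy j * -(A.mulVec yy j) = -∑ j, (A.mulVec yy j)^2 := by
          rw [← Finset.sum_neg_distrib]
          exact Finset.sum_congr rfl fun j _ => by ring
        rw [heq] at h; linarith
      funext j
      have := (Finset.sum_eq_zero_iff_of_nonneg (fun j _ => sq_nonneg (A.mulVec yy j))).mp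
        (le_antisymm h2 (Finset.sum_nonneg fun j _ => sq_nonneg _)) j (mem_univ j)
      exact pow_eq_zero_iff (n := 2) (by norm_num) |>.mp this
    have hycoord : ∀ i, ¬ S i → 0 ≤ yy i := by
      intro i hi
      have hmem : (EuclideanSpace.single i (1:ℝ)) ∈ D := by
        refine ⟨0, fun j => if j = i then 1 else 0, fun j hj => ?_, fun j => ?_, fun j => ?_⟩
        · by_cases h : j = i
          · subst h; exact absurd hj hi
          · simp [h]
        · positivity
        · simp [Matrix.mulVec_zero, EuclideanSpace.single_apply]
      have h := hyD _ hmem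
      rwa [EuclideanSpace.inner_single_left, starRingEnd_apply, star_trivial, one_mul] at h
    have hcontr := hb yy hAy hycoord
    rw [PiLp.inner_apply] at hy2
    simp only [RCLike.inner_apply', starRingEnd_apply, star_trivial] at hy2
    have hcomm : ∑ i, yy i * b i = ∑ i, b i * yy i := Finset.sum_congr rfl fun i _ => by ring
    linarith [hcomm ▸ hy2]
  -- compactness bound
  obtain ⟨ε, hε, hεbound⟩ : ∃ ε > (0:ℝ), ∀ v : EuclideanSpace ℝ (Fin N), A.mulVec v = 0 →
      (∀ i, ¬ S i → 0 ≤ v i) → ε * ‖v‖ ≤ ∑ i, v i := by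
    set C : Set (EuclideanSpace ℝ (Fin N)) :=
      {v | A.mulVec v = 0 ∧ ∀ i, ¬ S i → 0 ≤ v i} with hCdef
    have hcont : ∀ j : Fin m, Continuous fun v : EuclideanSpace ℝ (Fin N) => ∑ i, A j i * v i :=
      fun j => continuous_finset_sum _ fun i _ =>
        continuous_const.mul (EuclideanSpace.proj i).continuous
    have hsumcont : Continuous fun v : EuclideanSpace ℝ (Fin N) => ∑ i, v i :=
      continuous_finset_sum _ fun i _ => (EuclideanSpace.proj i).continuous
    have hCclosed : IsClosed C := by
      have h1 : C = (⋂ j, {v : EuclideanSpace ℝ (Fin N) | ∑ i, A j i * v i = 0}) ∩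
          (⋂ i, ⋂ (_ : ¬ S i), {v : EuclideanSpace ℝ (Fin N) | 0 ≤ v i}) := by
        ext v
        simp only [hCdef, Set.mem_setOf_eq, Set.mem_inter_iff, Set.mem_iInter, funext_iff,
          Matrix.mulVec, dotProduct, Pi.zero_apply]
      rw [h1]
      exact (isClosed_iInter fun j => isClosed_eq (hcont j) continuous_const).inter
        (isClosed_iInter fun i => isClosed_iInter fun _ =>
          isClosed_le continuous_const (EuclideanSpace.proj i).continuous)
    have hscale : ∀ v ∈ C, ∀ c : ℝ, 0 ≤ c → c • v ∈ C := by
      rintro v ⟨hv1, hv2⟩ c hc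
      refine ⟨by rw [WithLp.ofLp_smul, Matrix.mulVec_smul, hv1]; simp, fun i hi => ?_⟩
      have hci : (c • v) i = c * v i := rfl
      rw [hci]; exact mul_nonneg hc (hv2 i hi)
    by_cases hne : (C ∩ Metric.sphere (0:EuclideanSpace ℝ (Fin N)) 1).Nonempty
    · obtain ⟨v₀, hv₀, hmin⟩ := ((isCompact_sphere (0:EuclideanSpace ℝ (Fin N)) 1).inter_left
        hCclosed).exists_isMinOn hne hsumcont.continuousOn
      have hv₀n : ‖v₀‖ = 1 := by simpa using mem_sphere_zero_iff_norm.mp hv₀.2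
      have hv₀0 : (v₀ : Fin N → ℝ) ≠ 0 := by
        intro h
        have h0 : ‖v₀‖ = 0 := by
          have hh : v₀ = (0 : EuclideanSpace ℝ (Fin N)) := WithLp.ofLp_injective 2 h
          simp [hh]
        linarith [hv₀n, h0]
      refine ⟨∑ i, v₀ i, hN v₀ hv₀.1.1 hv₀.1.2 hv₀0, ?_⟩
      intro v hv1 hv2
      rcases eq_or_ne v 0 with rfl | hv0
      · simp
      · have hvn : (0:ℝ) < ‖v‖ := norm_pos_iff.mpr hv0
        have hmem : ‖v‖⁻¹ • v ∈ C ∩ Metric.sphere 0 1 := by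
          refine ⟨hscale v ⟨hv1, hv2⟩ _ (by positivity), ?_⟩
          rw [mem_sphere_zero_iff_norm, norm_smul]
          simp [abs_of_pos (inv_pos.mpr hvn), inv_mul_cancel₀ hvn.ne']
        have h := isMinOn_iff.mp hmin _ hmem
        have hsum : ∑ i, (‖v‖⁻¹ • v) i = ‖v‖⁻¹ * ∑ i, v i := by
          rw [Finset.mul_sum]; exact Finset.sum_congr rfl fun i _ => rfl
        rw [hsum] at h
        calc (∑ i, v₀ i) * ‖v‖ ≤ (‖v‖⁻¹ * ∑ i, v i) * ‖v‖ :=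
              mul_le_mul_of_nonneg_right h hvn.le
          _ = ∑ i, v i := by field_simp
    · refine ⟨1, one_pos, ?_⟩
      intro v hv1 hv2
      rcases eq_or_ne v 0 with rfl | hv0
      · simp
      · exfalso
        have hvn : (0:ℝ) < ‖v‖ := norm_pos_iff.mpr hv0
        refine hne ⟨‖v‖⁻¹ • v, hscale v ⟨hv1, hv2⟩ _ (by positivity), ?_⟩
        rw [mem_sphere_zero_iff_norm, norm_smul]
        simp [abs_of_pos (inv_pos.mpr hvn), inv_mul_cancel₀ hvn.ne']
  -- the target point and the ball around it
  set δ := ε / (N + 1) with hδdef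
  have hδ : 0 < δ := by positivity
  have hδε : δ * (N + 1) = ε := by
    rw [hδdef]; field_simp
  set p : EuclideanSpace ℝ (Fin N) := WithLp.toLp 2 (fun i => if S i then (1:ℝ) else 1 - δ) with hpdef
  have hball : Metric.ball p δ ⊆ closure D := by
    intro q hq
    rw [Metric.mem_ball, dist_eq_norm] at hq
    refine hsep q ?_
    intro v hv1 hv2
    have h1 : ε * ‖v‖ ≤ ∑ i, v i := hεbound v hv1 hv2
    have hqp : ∑ i, q i * v i = ∑ i, p i * v i + ∑ i, (q i - p i) * v i := by
      rw [← Finset.sum_add_distrib]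
      exact Finset.sum_congr rfl fun i _ => by ring
    have hpv : ∑ i, p i * v i = ∑ i, v i - δ * ∑ i, (if S i then 0 else v i) := by
      rw [Finset.mul_sum, ← Finset.sum_sub_distrib]
      refine Finset.sum_congr rfl fun i _ => ?_
      have hpi : p i = if S i then (1:ℝ) else 1 - δ := rfl
      rw [hpi]
      by_cases h : S i <;> simp [h] <;> ring
    have hite : ∑ i, (if S i then (0:ℝ) else v i) ≤ N * ‖v‖ := by
      calc ∑ i, (if S i then (0:ℝ) else v i) ≤ ∑ _i : Fin N, ‖v‖ := by
            refine Finset.sum_le_sum fun i _ => ?_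
            by_cases h : S i
            · simp [h, norm_nonneg]
            · simp only [h, if_false]
              exact (le_abs_self _).trans (coord_le_norm N v i)
        _ = N * ‖v‖ := by simp [Finset.sum_const, Fintype.card_fin, nsmul_eq_mul]
    have hinner : ∑ i, (q i - p i) * v i = ⟪q - p, v⟫_ℝ := by
      rw [PiLp.inner_apply]
      simp only [RCLike.inner_apply', starRingEnd_apply, star_trivial]
      exact Finset.sum_congr rfl fun i _ => rfl
    have hIb : -(δ * ‖v‖) ≤ ∑ i, (q i - p i) * v i := by
      rw [hinner]
      have h3 := abs_real_inner_le_norm (q - p) v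
      have h4 : ‖q - p‖ * ‖v‖ ≤ δ * ‖v‖ :=
        mul_le_mul_of_nonneg_right hq.le (norm_nonneg v)
      have h5 := neg_abs_le ⟪q - p, v⟫_ℝ
      linarith
    have h6 : δ * ∑ i, (if S i then (0:ℝ) else v i) ≤ δ * ((N:ℝ) * ‖v‖) :=
      mul_le_mul_of_nonneg_left hite hδ.le
    have h7 : ε * ‖v‖ = δ * ((N:ℝ) * ‖v‖) + δ * ‖v‖ := by rw [← hδε]; ring
    rw [hqp, hpv]
    linarith
  have hpD : p ∈ D := mem_of_ball_subset_closure N D Dc.convex p δ hδ hball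
  obtain ⟨u, w, hw0, hwp, hpw⟩ := hpD
  refine ⟨u, fun i hi => ?_, fun i hi => ?_⟩
  · have := hpw i
    have hpi : p i = (1:ℝ) := by simp [hpdef, hi]
    rw [hpi, hw0 i hi] at this
    linarith
  · have := hpw i
    have hpi : p i = 1 - δ := by simp [hpdef, hi]
    rw [hpi] at this
    have := hwp i
    linarith

/-- Corollary 5.5 (nonnegative basis pursuit): a feasible `x* ≥ 0` with `Ax* = y`
is the unique minimizer of `‖x‖₁` over `{x : Ax = y, x ≥ 0}` iff the columns of `A`
on the support `S` of `x*` are linearly independent and there exists `u` with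
`(Aᵀu)_S = 𝟏` and `(Aᵀu)_{S^c} < 𝟏`. -/
theorem nonneg_basis_pursuit_uniqueness
    (m N : ℕ) (A : Matrix (Fin m) (Fin N) ℝ) (y : Fin m → ℝ)
    (xstar : Fin N → ℝ) (hnonneg : ∀ i, 0 ≤ xstar i) (hfeas : A.mulVec xstar = y) :
    (∀ x : Fin N → ℝ, (A.mulVec x = y ∧ ∀ i, 0 ≤ x i) → x ≠ xstar →
        (∑ i, |xstar i|) < ∑ i, |x i|) ↔
    (LinearIndependent ℝ
        (fun i : {i : Fin N // xstar i ≠ 0} => (fun j : Fin m => A j i.1)) ∧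
      ∃ u : Fin m → ℝ,
        (∀ i, xstar i ≠ 0 → A.transpose.mulVec u i = 1) ∧
        (∀ i, xstar i = 0 → A.transpose.mulVec u i < 1)) := by
  classical
  constructor
  · intro P
    -- derive the kernel positivity property
    have hNprop : ∀ v : Fin N → ℝ, A.mulVec v = 0 → (∀ i, xstar i = 0 → 0 ≤ v i) →
        v ≠ 0 → 0 < ∑ i, v i := by
      intro v hv1 hv2 hv3
      obtain ⟨i₀, hi₀⟩ := Function.ne_iff.mp hv3
      set b : Fin N → ℝ := fun i => if v i < 0 then xstar i / (-v i) else 1 with hbdef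
      have hbpos : ∀ i, 0 < b i := by
        intro i
        by_cases h : v i < 0
        · have hx : xstar i ≠ 0 := fun h0 => absurd (hv2 i h0) (not_le.mpr h)
          have hxp : 0 < xstar i := lt_of_le_of_ne (hnonneg i) (Ne.symm hx)
          have hneg : 0 < -v i := neg_pos.mpr h
          simp only [hbdef, if_pos h]
          exact div_pos hxp hneg
        · simp [hbdef, h]
      set t := Finset.univ.inf' ⟨i₀, mem_univ i₀⟩ b with htdef
      have ht : 0 < t := (Finset.lt_inf'_iff _).mpr fun i _ => hbpos i
      have htle : ∀ i, t ≤ b i := fun i => Finset.inf'_le _ (mem_univ i)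
      have hx : ∀ i, 0 ≤ xstar i + t * v i := by
        intro i
        by_cases h : v i < 0
        · have hb : b i = xstar i / (-v i) := by simp [hbdef, h]
          have h1 := htle i
          rw [hb] at h1
          have hneg : 0 < -v i := neg_pos.mpr h
          have h2 : t * (-v i) ≤ xstar i := (le_div_iff₀ hneg).mp h1
          nlinarith
        · have h1 : 0 ≤ v i := not_lt.mp h
          nlinarith [hnonneg i]
      have hfx : A.mulVec (xstar + t • v) = y := by
        rw [Matrix.mulVec_add, Matrix.mulVec_smul, hv1, hfeas]; simp
      have hne : xstar + t • v ≠ xstar := by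
        intro h
        have h1 := congrFun h i₀
        simp only [Pi.add_apply, Pi.smul_apply, smul_eq_mul] at h1
        have : t * v i₀ = 0 := by linarith
        rcases mul_eq_zero.mp this with h2 | h2
        · exact ht.ne' h2
        · exact hi₀ h2
      have hP := P (xstar + t • v) ⟨hfx, fun i => by
        simpa [Pi.add_apply, Pi.smul_apply, smul_eq_mul] using hx i⟩ hne
      have e1 : ∑ i, |xstar i| = ∑ i, xstar i :=
        Finset.sum_congr rfl fun i _ => abs_of_nonneg (hnonneg i)
      have e2 : ∑ i, |(xstar + t • v) i| = ∑ i, (xstar i + t * v i) :=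
        Finset.sum_congr rfl fun i _ => by
          have h1 : (xstar + t • v) i = xstar i + t * v i := rfl
          rw [h1]; exact abs_of_nonneg (hx i)
      rw [e1, e2] at hP
      have e3 : ∑ i, (xstar i + t * v i) = ∑ i, xstar i + t * ∑ i, v i := by
        rw [Finset.sum_add_distrib, Finset.mul_sum]
      rw [e3] at hP
      have h4 : 0 < t * ∑ i, v i := by linarith
      nlinarith
    constructor
    · rw [Fintype.linearIndependent_iff]
      intro g hg
      set v : Fin N → ℝ := fun i => if h : xstar i ≠ 0 then g ⟨i, h⟩ else 0 with hvdef
      have hsub : ∀ j, ∑ i, A j i * v i = ∑ i : {i : Fin N // xstar i ≠ 0}, A j i.1 * v i.1 := by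
        intro j
        rw [← Finset.sum_subtype (Finset.univ.filter fun i => xstar i ≠ 0)
          (fun i => by simp) (fun i => A j i * v i)]
        refine (Finset.sum_subset (Finset.filter_subset _ _) ?_).symm
        intro i _ hi
        have hxi : ¬ xstar i ≠ 0 := by simpa using hi
        have hvi : v i = 0 := by simp [hvdef, hxi]
        rw [hvi, mul_zero]
      have hAv : A.mulVec v = 0 := by
        funext j
        have hgj := congrFun hg j
        simp only [Finset.sum_apply, Pi.smul_apply, smul_eq_mul, Pi.zero_apply] at hgj
        show A.mulVec v j = (0 : Fin m → ℝ) j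
        have hmv : A.mulVec v j = ∑ i, A j i * v i := by
          simp [Matrix.mulVec, dotProduct]
        rw [hmv, Pi.zero_apply, hsub j]
        have hre : ∑ i : {i : Fin N // xstar i ≠ 0}, A j i.1 * v i.1
            = ∑ i : {i : Fin N // xstar i ≠ 0}, g i * A j i.1 :=
          Finset.sum_congr rfl fun i _ => by
            rw [show v i.1 = g i from by simp [hvdef, i.2]]; ring
        rw [hre, hgj]
      have hv0 : v = 0 := by
        by_contra hv0
        have h1 := hNprop v hAv (fun i h => by simp [hvdef, h]) hv0
        have h2 := hNprop (-v) (by rw [Matrix.mulVec_neg, hAv, neg_zero])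
          (fun i h => by simp [hvdef, h]) (neg_ne_zero.mpr hv0)
        have h3 : ∑ i, (-v) i = -∑ i, v i := by
          simp [Finset.sum_neg_distrib]
        rw [h3] at h2
        linarith
      intro i
      have := congrFun hv0 i.1
      simpa [hvdef, i.2] using this
    · obtain ⟨u, hu1, hu2⟩ := dual_certificate m N A (fun i => xstar i ≠ 0) (by
        intro v hv1 hv2 hv3
        exact hNprop v hv1 (fun i hi => hv2 i (not_not.mpr hi)) hv3)
      exact ⟨u, hu1, fun i hi => hu2 i (not_not.mpr hi)⟩
  · rintro ⟨hLI, u, hu1, hu2⟩ x ⟨hxfeas, hxpos⟩ hxne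
    have hsum_t : ∀ z : Fin N → ℝ, A.mulVec z = y →
        ∑ i, A.transpose.mulVec u i * z i = ∑ j, y j * u j := by
      intro z hz
      rw [sum_swap_aux m N A u z, hz]
    have heq : ∑ i, A.transpose.mulVec u i * x i = ∑ i, A.transpose.mulVec u i * xstar i := by
      rw [hsum_t x hxfeas, hsum_t xstar hfeas]
    have hxstar_sum : ∑ i, xstar i = ∑ i, A.transpose.mulVec u i * xstar i :=
      Finset.sum_congr rfl fun i _ => by
        by_cases h : xstar i = 0
        · simp [h]
        · rw [hu1 i h, one_mul]
    have htle : ∀ i, A.transpose.mulVec u i ≤ 1 := by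
      intro i
      by_cases h : xstar i = 0
      · exact (hu2 i h).le
      · exact (hu1 i h).le
    have hterm : ∀ i, 0 ≤ (1 - A.transpose.mulVec u i) * x i := fun i =>
      mul_nonneg (by linarith [htle i]) (hxpos i)
    have hexpand : ∑ i, (1 - A.transpose.mulVec u i) * x i
        = ∑ i, x i - ∑ i, A.transpose.mulVec u i * x i := by
      rw [← Finset.sum_sub_distrib]
      exact Finset.sum_congr rfl fun i _ => by ring
    have hge : ∑ i, xstar i ≤ ∑ i, x i := by
      have h0 : 0 ≤ ∑ i, (1 - A.transpose.mulVec u i) * x i :=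
        Finset.sum_nonneg fun i _ => hterm i
      rw [hexpand] at h0
      linarith
    have hne2 : ∑ i, xstar i ≠ ∑ i, x i := by
      intro hsumeq
      have h0 : ∑ i, (1 - A.transpose.mulVec u i) * x i = 0 := by
        rw [hexpand]; linarith
      have hzero : ∀ i, (1 - A.transpose.mulVec u i) * x i = 0 := fun i =>
        (Finset.sum_eq_zero_iff_of_nonneg (fun i _ => hterm i)).mp h0 i (mem_univ i)
      have hsupp : ∀ i, xstar i = 0 → x i = 0 := by
        intro i h
        rcases mul_eq_zero.mp (hzero i) with h1 | h2
        · exfalso; have := hu2 i h; linarith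
        · exact h2
      rw [Fintype.linearIndependent_iff] at hLI
      have hg := hLI (fun i => x i.1 - xstar i.1) ?_
      · apply hxne
        funext i
        by_cases h : xstar i = 0
        · rw [hsupp i h, h]
        · have := hg ⟨i, h⟩
          simp only at this
          linarith
      · have hker : A.mulVec (x - xstar) = 0 := by
          rw [Matrix.mulVec_sub, hxfeas, hfeas, sub_self]
        funext j
        rw [Finset.sum_apply]
        simp only [Pi.smul_apply, smul_eq_mul, Pi.zero_apply]
        have hmv : ∑ i, A j i * (x i - xstar i) = 0 := by
          have hkj := congrFun hker j
          simpa [Matrix.mulVec, dotProduct] using hkj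
        calc ∑ i : {i : Fin N // xstar i ≠ 0}, (x i.1 - xstar i.1) * A j i.1
            = ∑ i ∈ Finset.univ.filter (fun i => xstar i ≠ 0), (x i - xstar i) * A j i :=
              (Finset.sum_subtype (Finset.univ.filter fun i => xstar i ≠ 0)
                (fun i => by simp) (fun i => (x i - xstar i) * A j i)).symm
          _ = ∑ i, (x i - xstar i) * A j i := by
              refine Finset.sum_subset (Finset.filter_subset _ _) ?_
              intro i _ hi
              have hxi : xstar i = 0 := by simpa using hi
              rw [hsupp i hxi, hxi, sub_zero, zero_mul]
          _ = ∑ i, A j i * (x i - xstar i) :=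
              Finset.sum_congr rfl fun i _ => by ring
          _ = 0 := hmv
    have hlt : ∑ i, xstar i < ∑ i, x i := lt_of_le_of_ne hge hne2
    calc ∑ i, |xstar i| = ∑ i, xstar i :=
          Finset.sum_congr rfl fun i _ => abs_of_nonneg (hnonneg i)
      _ < ∑ i, x i := hlt
      _ = ∑ i, |x i| := (Finset.sum_congr rfl fun i _ => abs_of_nonneg (hxpos i)).symm
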